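/- arXiv:2003.00581 — 6 statements merged into one kernel-verified Lean document; each statement's English description precedes it below -/
import Mathlib

section
/- For complex s with 0 < Re(s) < 1, ∫₀^∞ {1/y} · y^{s-1} dy = -ζ(s)/s, where {x} denotes the fractional part of x. -/
open MeasureTheory Set Filter Topology

noncomputable def phiAux (n : ℕ) (s : ℂ) : ℂ :=
  ((n + 1 : ℂ) ^ (-s + 1) - (n : ℂ) ^ (-s + 1)) / (-s + 1) -
    (n : ℂ) * (((n + 1 : ℂ) ^ (-s) - (n : ℂ) ^ (-s)) / (-s))

noncomputable def GAux (s : ℂ) : ℂ := ∑' n : ℕ, phiAux (n + 1) s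

lemma phi_eq_integral (n : ℕ) (hn : 1 ≤ n) {s : ℂ} (hs0 : s ≠ 0) (hs1 : s ≠ 1) :
    phiAux n s = ∫ x in (n : ℝ)..((n : ℝ) + 1), (x : ℂ) ^ (-s - 1) * ((x : ℂ) - (n : ℂ)) := by
  have hn' : (1 : ℝ) ≤ (n : ℝ) := by exact_mod_cast hn
  have h0 : (0 : ℝ) ∉ Set.uIcc (n : ℝ) ((n : ℝ) + 1) := by
    rw [Set.uIcc_of_le (by linarith)]
    rintro ⟨h1, -⟩; linarith
  have key : ∀ x ∈ Set.uIcc (n : ℝ) ((n : ℝ) + 1),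
      (x : ℂ) ^ (-s - 1) * ((x : ℂ) - (n : ℂ)) = (x : ℂ) ^ (-s) - (n : ℂ) * (x : ℂ) ^ (-s - 1) := by
    intro x hx
    rw [Set.uIcc_of_le (by linarith)] at hx
    have hxpos : (0 : ℝ) < x := by linarith [hx.1]
    have hx0 : (x : ℂ) ≠ 0 := by exact_mod_cast hxpos.ne'
    have h1 : (x : ℂ) ^ (-s - 1 + 1) = (x : ℂ) ^ (-s - 1) * (x : ℂ) ^ (1 : ℂ) :=
      Complex.cpow_add _ _ hx0
    rw [show (-s - 1 + 1 : ℂ) = -s by ring, Complex.cpow_one] at h1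
    rw [h1]; ring
  rw [intervalIntegral.integral_congr key]
  have hi1 : IntervalIntegrable (fun x : ℝ => (x : ℂ) ^ (-s)) volume (n : ℝ) ((n : ℝ) + 1) :=
    intervalIntegral.intervalIntegrable_cpow (Or.inr h0)
  have hi2 : IntervalIntegrable (fun x : ℝ => (x : ℂ) ^ (-s - 1)) volume (n : ℝ) ((n : ℝ) + 1) :=
    intervalIntegral.intervalIntegrable_cpow (Or.inr h0)
  rw [intervalIntegral.integral_sub hi1 (hi2.const_mul _),
    intervalIntegral.integral_const_mul,
    integral_cpow (Or.inr ⟨fun h => hs1 (by linear_combination -h), h0⟩),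
    integral_cpow (Or.inr ⟨fun h => hs0 (by linear_combination -h), h0⟩)]
  rw [show (-s - 1 + 1 : ℂ) = -s by ring]
  push_cast
  rw [phiAux]

lemma phi_norm_bound (n : ℕ) (hn : 1 ≤ n) {s : ℂ} {δ : ℝ} (hδ : 0 < δ) (hδs : δ ≤ s.re)
    (hs1 : s ≠ 1) : ‖phiAux n s‖ ≤ (n : ℝ) ^ (-1 - δ) := by
  have hs0 : s ≠ 0 := fun h => by rw [h] at hδs; simp at hδs; linarith
  have hn' : (1 : ℝ) ≤ (n : ℝ) := by exact_mod_cast hn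
  rw [phi_eq_integral n hn hs0 hs1]
  have := intervalIntegral.norm_integral_le_of_norm_le_const
    (a := (n : ℝ)) (b := (n : ℝ) + 1) (C := (n : ℝ) ^ (-1 - δ))
    (f := fun x : ℝ => (x : ℂ) ^ (-s - 1) * ((x : ℂ) - (n : ℂ))) ?_
  · simpa using this
  · intro x hx
    rw [Set.uIoc_of_le (by linarith)] at hx
    have hx1 : (1 : ℝ) ≤ x := le_trans hn' hx.1.le
    have hxpos : (0 : ℝ) < x := by linarith
    have hnorm : ‖(x : ℂ) ^ (-s - 1)‖ = x ^ (-s.re - 1) := by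
      rw [Complex.norm_cpow_eq_rpow_re_of_pos hxpos]
      norm_num
    have h2 : ‖(x : ℂ) - (n : ℂ)‖ = x - (n : ℝ) := by
      rw [show ((x : ℂ) - (n : ℂ)) = ((x - (n : ℝ) : ℝ) : ℂ) by push_cast; ring,
        Complex.norm_real, Real.norm_eq_abs, abs_of_nonneg (by linarith [hx.1.le])]
    rw [norm_mul, hnorm, h2]
    have b1 : x ^ (-s.re - 1) ≤ x ^ (-δ - 1) :=
      Real.rpow_le_rpow_of_exponent_le hx1 (by linarith)
    have b2 : x ^ (-δ - 1) ≤ (n : ℝ) ^ (-δ - 1) :=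
      Real.rpow_le_rpow_of_nonpos (by linarith) hx.1.le (by linarith)
    have b3 : x - (n : ℝ) ≤ 1 := by linarith [hx.2]
    calc x ^ (-s.re - 1) * (x - (n : ℝ)) ≤ (n : ℝ) ^ (-δ - 1) * 1 := by
          apply mul_le_mul (le_trans b1 b2) b3 (by linarith [hx.1.le]) (Real.rpow_nonneg (by linarith) _)
      _ = (n : ℝ) ^ (-1 - δ) := by rw [mul_one]; ring_nf

lemma summable_phi {s : ℂ} (hs : 0 < s.re) (hs1 : s ≠ 1) :
    Summable fun n : ℕ => phiAux (n + 1) s := by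
  apply Summable.of_norm
  apply Summable.of_nonneg_of_le (fun n => norm_nonneg _)
    (fun n => phi_norm_bound (n + 1) (by omega) hs le_rfl hs1)
  have h1 : Summable fun n : ℕ => (n : ℝ) ^ (-1 - s.re) :=
    Real.summable_nat_rpow.mpr (by linarith)
  have := (summable_nat_add_iff 1).mpr h1
  exact this.congr (fun n => by push_cast; ring_nf)

lemma differentiableAt_phiAux (n : ℕ) (hn : 1 ≤ n) {s : ℂ} (hs0 : s ≠ 0) (hs1 : s ≠ 1) :
    DifferentiableAt ℂ (phiAux n) s := by
  have hb1 : ((n : ℂ) + 1) ≠ 0 := by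
    intro h
    have := congrArg Complex.re h
    push_cast at this
    norm_num at this
    linarith [this, (Nat.cast_nonneg (α := ℝ) n)]
  have hb2 : (n : ℂ) ≠ 0 := by
    exact Nat.cast_ne_zero.mpr (by omega : n ≠ 0)
  have hd1 : DifferentiableAt ℂ (fun z : ℂ => -z + 1) s := by fun_prop
  have hd2 : DifferentiableAt ℂ (fun z : ℂ => -z) s := by fun_prop
  have hc1 : DifferentiableAt ℂ (fun z : ℂ => ((n : ℂ) + 1) ^ (-z + 1)) s :=
    hd1.const_cpow (Or.inl hb1)
  have hc2 : DifferentiableAt ℂ (fun z : ℂ => (n : ℂ) ^ (-z + 1)) s :=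
    hd1.const_cpow (Or.inl hb2)
  have hc3 : DifferentiableAt ℂ (fun z : ℂ => ((n : ℂ) + 1) ^ (-z)) s :=
    hd2.const_cpow (Or.inl hb1)
  have hc4 : DifferentiableAt ℂ (fun z : ℂ => (n : ℂ) ^ (-z)) s :=
    hd2.const_cpow (Or.inl hb2)
  have hne1 : (-s + 1 : ℂ) ≠ 0 := fun h => hs1 (by linear_combination -h)
  have hne2 : (-s : ℂ) ≠ 0 := fun h => hs0 (by linear_combination -h)
  exact ((hc1.sub hc2).div hd1 hne1).sub
    ((differentiableAt_const _).mul ((hc3.sub hc4).div hd2 hne2))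

lemma differentiableAt_GAux {s : ℂ} (hs : 0 < s.re) (hs1 : s ≠ 1) :
    DifferentiableAt ℂ GAux s := by
  set δ : ℝ := s.re / 2 with hδ
  have hδ0 : 0 < δ := by positivity
  set O : Set ℂ := {z : ℂ | δ < z.re} \ {1} with hO
  have hOopen : IsOpen O :=
    (isOpen_lt continuous_const Complex.continuous_re).sdiff isClosed_singleton
  have hsO : s ∈ O := ⟨show δ < s.re by rw [hδ]; linarith, by simpa using hs1⟩
  have hu : Summable fun n : ℕ => ((n + 1 : ℕ) : ℝ) ^ (-1 - δ) := by
    have h1 : Summable fun n : ℕ => (n : ℝ) ^ (-1 - δ) :=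
      Real.summable_nat_rpow.mpr (by linarith)
    exact (summable_nat_add_iff 1).mpr h1
  have huf : TendstoUniformlyOn (fun (t : Finset ℕ) z => ∑ n ∈ t, phiAux (n + 1) z)
      (fun z => ∑' n : ℕ, phiAux (n + 1) z) atTop O := by
    apply tendstoUniformlyOn_tsum hu
    intro n z hz
    have hz1 : z ≠ 1 := by simpa using hz.2
    exact phi_norm_bound (n + 1) (by omega) hδ0 (le_of_lt hz.1) hz1
  have hdiff : DifferentiableOn ℂ GAux O := by
    apply (huf.tendstoLocallyUniformlyOn).differentiableOn ?_ hOopen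
    filter_upwards with t
    apply DifferentiableOn.fun_sum
    intro n _
    intro z hz
    have hzre : δ < z.re := hz.1
    have hz0 : z ≠ 0 := by
      intro h; rw [h] at hzre; rw [Complex.zero_re] at hzre; linarith
    have hz1 : z ≠ 1 := by simpa using hz.2
    exact (differentiableAt_phiAux (n + 1) (by omega) hz0 hz1).differentiableWithinAt
  exact (hdiff.differentiableAt (hOopen.mem_nhds hsO))

lemma tendsto_cpow_zero {c : ℂ} (hc : c.re < 0) :
    Tendsto (fun N : ℕ => ((N : ℂ) + 1) ^ c) atTop (𝓝 0) := by
  rw [tendsto_zero_iff_norm_tendsto_zero]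
  have hnorm : ∀ N : ℕ, ‖((N : ℂ) + 1) ^ c‖ = ((N : ℝ) + 1) ^ c.re := by
    intro N
    rw [show ((N : ℂ) + 1) = (((N : ℝ) + 1 : ℝ) : ℂ) by push_cast; ring,
      Complex.norm_cpow_eq_rpow_re_of_pos (by positivity)]
  simp_rw [hnorm]
  have h1 : Tendsto (fun x : ℝ => x ^ c.re) atTop (𝓝 0) := by
    have := tendsto_rpow_neg_atTop (y := -c.re) (by linarith)
    simpa using this
  exact h1.comp (tendsto_atTop_add_const_right atTop 1 tendsto_natCast_atTop_atTop)

lemma hasSum_phiAux {s : ℂ} (hs : 1 < s.re) :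
    HasSum (fun n : ℕ => phiAux (n + 1) s) (1 / (s - 1) - riemannZeta s / s) := by
  have hs0 : s ≠ 0 := fun h => by rw [h] at hs; simp at hs; linarith
  have hs1 : s ≠ 1 := fun h => by rw [h] at hs; simp at hs
  have hsum := summable_phi (by linarith) hs1
  rw [hsum.hasSum_iff_tendsto_nat]
  have key : ∀ N : ℕ, ∑ n ∈ Finset.range N, phiAux (n + 1) s =
      (((N : ℂ) + 1) ^ (-s + 1) - 1) / (-s + 1) -
        ((N : ℂ) * ((N : ℂ) + 1) ^ (-s) - ∑ n ∈ Finset.range N, ((n : ℂ) + 1) ^ (-s)) / (-s) := by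
    intro N
    induction N with
    | zero => simp [Complex.one_cpow]
    | succ N ih =>
      rw [Finset.sum_range_succ, ih, Finset.sum_range_succ, phiAux]
      push_cast
      have hne1 : (-s + 1 : ℂ) ≠ 0 := fun h => hs1 (by linear_combination -h)
      have hne2 : (-s : ℂ) ≠ 0 := fun h => hs0 (by linear_combination -h)
      field_simp
      ring
  simp_rw [key]
  have T1 : Tendsto (fun N : ℕ => ((N : ℂ) + 1) ^ (-s + 1)) atTop (𝓝 0) :=
    tendsto_cpow_zero (by simp; linarith)
  have T2 : Tendsto (fun N : ℕ => (N : ℂ) * ((N : ℂ) + 1) ^ (-s)) atTop (𝓝 0) := by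
    rw [tendsto_zero_iff_norm_tendsto_zero]
    apply squeeze_zero (fun N => norm_nonneg _) (g := fun N : ℕ => ((N : ℝ) + 1) ^ (1 - s.re))
    · intro N
      have e1 : ‖(N : ℂ)‖ = (N : ℝ) := by simp
      have e2 : ‖((N : ℂ) + 1) ^ (-s)‖ = ((N : ℝ) + 1) ^ (-s.re) := by
        rw [show ((N : ℂ) + 1) = (((N : ℝ) + 1 : ℝ) : ℂ) by push_cast; ring,
          Complex.norm_cpow_eq_rpow_re_of_pos (by positivity),
          Complex.neg_re]
      rw [norm_mul, e1, e2]
      calc (N : ℝ) * ((N : ℝ) + 1) ^ (-s.re)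
          ≤ ((N : ℝ) + 1) * ((N : ℝ) + 1) ^ (-s.re) := by
            apply mul_le_mul_of_nonneg_right (by linarith) (Real.rpow_nonneg (by positivity) _)
        _ = ((N : ℝ) + 1) ^ (1 - s.re) := by
            rw [show (1 - s.re) = 1 + (-s.re) by ring, Real.rpow_add (by positivity),
              Real.rpow_one]
    · have h1 : Tendsto (fun x : ℝ => x ^ (1 - s.re)) atTop (𝓝 0) := by
        have := tendsto_rpow_neg_atTop (y := s.re - 1) (by linarith)
        simpa [neg_sub] using this
      exact h1.comp (tendsto_atTop_add_const_right atTop 1 tendsto_natCast_atTop_atTop)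
  have T3 : Tendsto (fun N : ℕ => ∑ n ∈ Finset.range N, ((n : ℂ) + 1) ^ (-s)) atTop
      (𝓝 (riemannZeta s)) := by
    have hsummable : Summable fun n : ℕ => ((n : ℂ) + 1) ^ (-s) := by
      have h1 : Summable fun n : ℕ => 1 / (n : ℂ) ^ s := Complex.summable_one_div_nat_cpow.mpr hs
      have h2 := (summable_nat_add_iff 1).mpr h1
      apply h2.congr
      intro n
      rw [Complex.cpow_neg, one_div]
      push_cast
      ring_nf
    have := hsummable.hasSum.tendsto_sum_nat
    rwa [show ∑' n : ℕ, ((n : ℂ) + 1) ^ (-s) = riemannZeta s by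
      rw [zeta_eq_tsum_one_div_nat_add_one_cpow hs]
      exact tsum_congr fun n => by rw [Complex.cpow_neg, one_div]] at this
  have := ((T1.sub_const 1).div_const (-s + 1)).sub ((T2.sub T3).div_const (-s))
  convert this using 2
  have hne1 : (-s + 1 : ℂ) ≠ 0 := fun h => hs1 (by linear_combination -h)
  have hne2 : (-s : ℂ) ≠ 0 := fun h => hs0 (by linear_combination -h)
  have hne3 : (s - 1 : ℂ) ≠ 0 := fun h => hs1 (by linear_combination h)
  field_simp
  ring

lemma preconnected_V : IsPreconnected {z : ℂ | 0 < z.re ∧ z ≠ 1} := by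
  set A : Set ℂ := {z | 0 < z.re} ∩ {z | z.re < 1} with hA
  set B : Set ℂ := {z | 1 < z.re} with hB
  set C : Set ℂ := {z | 0 < z.re} ∩ {z | 0 < z.im} with hC
  set D : Set ℂ := {z | 0 < z.re} ∩ {z | z.im < 0} with hD
  have hAc : Convex ℝ A := (convex_halfSpace_re_gt 0).inter (convex_halfSpace_re_lt 1)
  have hBc : Convex ℝ B := convex_halfSpace_re_gt 1
  have hCc : Convex ℝ C := (convex_halfSpace_re_gt 0).inter (convex_halfSpace_im_gt 0)
  have hDc : Convex ℝ D := (convex_halfSpace_re_gt 0).inter (convex_halfSpace_im_lt 0)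
  have p1 : IsPreconnected (A ∪ C) :=
    IsPreconnected.union (⟨1/2, 1/2⟩ : ℂ) (by constructor <;> norm_num)
      (by constructor <;> norm_num) hAc.isPreconnected hCc.isPreconnected
  have p2 : IsPreconnected ((A ∪ C) ∪ B) :=
    IsPreconnected.union (⟨2, 1⟩ : ℂ) (Or.inr (by constructor <;> norm_num))
      (by norm_num [hB]) p1 hBc.isPreconnected
  have p3 : IsPreconnected (((A ∪ C) ∪ B) ∪ D) :=
    IsPreconnected.union (⟨2, -1⟩ : ℂ) (Or.inr (by norm_num [hB]))
      (by constructor <;> norm_num) p2 hDc.isPreconnected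
  have heq : {z : ℂ | 0 < z.re ∧ z ≠ 1} = ((A ∪ C) ∪ B) ∪ D := by
    ext z
    simp only [Set.mem_setOf_eq, Set.mem_union, Set.mem_inter_iff, hA, hB, hC, hD]
    constructor
    · rintro ⟨h0, h1⟩
      rcases lt_trichotomy z.re 1 with h | h | h
      · exact Or.inl (Or.inl (Or.inl ⟨h0, h⟩))
      · rcases lt_trichotomy z.im 0 with h' | h' | h'
        · exact Or.inr ⟨h0, h'⟩
        · exact absurd (Complex.ext h (by simpa using h')) h1
        · exact Or.inl (Or.inl (Or.inr ⟨h0, h'⟩))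
      · exact Or.inl (Or.inr h)
    · rintro (((⟨h0, h⟩ | ⟨h0, h⟩) | h) | ⟨h0, h⟩)
      · exact ⟨h0, fun he => by rw [he] at h; simp at h⟩
      · exact ⟨h0, fun he => by rw [he] at h; simp at h⟩
      · exact ⟨by linarith, fun he => by rw [he] at h; simp at h⟩
      · exact ⟨h0, fun he => by rw [he] at h; simp at h⟩
  rw [heq] at *
  exact p3

lemma GAux_eq {s : ℂ} (hs : 0 < s.re) (hs1 : s ≠ 1) :
    GAux s = 1 / (s - 1) - riemannZeta s / s := by
  set V : Set ℂ := {z : ℂ | 0 < z.re ∧ z ≠ 1} with hV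
  have hVopen : IsOpen V := by
    have : V = {z : ℂ | 0 < z.re} ∩ {(1 : ℂ)}ᶜ := by
      ext z; simp [hV, Set.mem_setOf_eq]
    rw [this]
    exact (isOpen_lt continuous_const Complex.continuous_re).inter isOpen_compl_singleton
  have hG : AnalyticOnNhd ℂ GAux V :=
    DifferentiableOn.analyticOnNhd
      (fun z hz => (differentiableAt_GAux hz.1 hz.2).differentiableWithinAt) hVopen
  have hg : AnalyticOnNhd ℂ (fun z => 1 / (z - 1) - riemannZeta z / z) V := by
    apply DifferentiableOn.analyticOnNhd ?_ hVopen
    intro z hz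
    have hz0 : z ≠ 0 := fun h => by rw [h] at hz; simp [hV] at hz
    have hz1 : z ≠ 1 := hz.2
    have hzsub : (z - 1 : ℂ) ≠ 0 := sub_ne_zero.mpr hz1
    apply DifferentiableAt.differentiableWithinAt
    apply DifferentiableAt.sub
    · exact (differentiableAt_const _).div (differentiableAt_id.sub (differentiableAt_const _))
        hzsub
    · exact (differentiableAt_riemannZeta hz1).div differentiableAt_id hz0
  have h2V : (2 : ℂ) ∈ V := by
    constructor
    · norm_num [hV]
    · intro h; exact (by norm_num : (2 : ℂ) ≠ 1) h
  have hEv : GAux =ᶠ[𝓝 (2 : ℂ)] fun z => 1 / (z - 1) - riemannZeta z / z := by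
    have hopen : IsOpen {z : ℂ | 1 < z.re} := isOpen_lt continuous_const Complex.continuous_re
    have h2 : (2 : ℂ) ∈ {z : ℂ | 1 < z.re} := by norm_num [Set.mem_setOf_eq]
    filter_upwards [hopen.mem_nhds h2] with z hz
    exact (hasSum_phiAux hz).tsum_eq
  exact hG.eqOn_of_preconnected_of_eventuallyEq hg preconnected_V h2V hEv ⟨hs, hs1⟩

theorem stmt_3 (s : ℂ) (hs : 0 < s.re) (hs1 : s.re < 1) :
    ∫ y in Set.Ioi (0 : ℝ), ((Int.fract (1 / y) : ℝ) : ℂ) * (y : ℂ) ^ (s - 1) =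
      -riemannZeta s / s := by
  have hs1' : s ≠ 1 := fun h => by rw [h] at hs1; simp at hs1
  have hs0' : s ≠ 0 := fun h => by rw [h] at hs; simp at hs
  have hne1 : (-s + 1 : ℂ) ≠ 0 := fun h => hs1' (by linear_combination -h)
  set f : ℝ → ℂ := fun x => (x : ℂ) ^ (-s - 1) * ((Int.fract x : ℝ) : ℂ) with hf
  have step1 : (∫ y in Set.Ioi (0 : ℝ), ((Int.fract (1 / y) : ℝ) : ℂ) * (y : ℂ) ^ (s - 1)) =
      ∫ x in Set.Ioi (0 : ℝ), f x := by
    have h1 : (∫ y in Set.Ioi (0 : ℝ), ((Int.fract (1 / y) : ℝ) : ℂ) * (y : ℂ) ^ (s - 1)) =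
        mellin (fun y : ℝ => ((Int.fract y⁻¹ : ℝ) : ℂ)) s := by
      rw [mellin]
      apply setIntegral_congr_fun measurableSet_Ioi
      intro y _
      simp only [smul_eq_mul, one_div]
      exact mul_comm _ _
    rw [h1, mellin_comp_inv (fun x : ℝ => ((Int.fract x : ℝ) : ℂ)) s, mellin]
    apply setIntegral_congr_fun measurableSet_Ioi
    intro x _
    simp only [smul_eq_mul, hf]
  have meas : ∀ S : Set ℝ, S ⊆ Set.Ioi 0 → MeasurableSet S →
      AEStronglyMeasurable f (volume.restrict S) := by
    intro S hS hSm
    apply AEStronglyMeasurable.mul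
    · exact ContinuousOn.aestronglyMeasurable
        (fun x hx => (Complex.continuousAt_ofReal_cpow_const x _
          (Or.inr (ne_of_gt (hS hx)))).continuousWithinAt) hSm
    · exact (Complex.measurable_ofReal.comp measurable_fract).aestronglyMeasurable
  have hfract_le : ∀ x : ℝ, 0 ≤ x → Int.fract x ≤ x := by
    intro x hx
    have h1 : (0 : ℝ) ≤ (⌊x⌋ : ℝ) := by exact_mod_cast Int.floor_nonneg.mpr hx
    rw [Int.fract]; linarith
  have hnorm_f : ∀ x : ℝ, 0 < x → ‖f x‖ = x ^ (-s.re - 1) * Int.fract x := by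
    intro x hx
    rw [hf, norm_mul, Complex.norm_cpow_eq_rpow_re_of_pos hx,
      Complex.norm_real, Real.norm_eq_abs, abs_of_nonneg (Int.fract_nonneg x)]
    congr 2
  have I01 : IntegrableOn f (Set.Ioc 0 1) := by
    apply Integrable.mono' (g := fun x : ℝ => x ^ (-s.re))
      ((intervalIntegrable_iff_integrableOn_Ioc_of_le zero_le_one).mp
        (intervalIntegral.intervalIntegrable_rpow' (by linarith)))
      (meas _ Set.Ioc_subset_Ioi_self measurableSet_Ioc)
    rw [ae_restrict_iff' measurableSet_Ioc]
    filter_upwards with x hx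
    rw [hnorm_f x hx.1]
    calc x ^ (-s.re - 1) * Int.fract x ≤ x ^ (-s.re - 1) * x := by
          apply mul_le_mul_of_nonneg_left (hfract_le x hx.1.le) (Real.rpow_nonneg hx.1.le _)
      _ = x ^ (-s.re - 1) * x ^ (1 : ℝ) := by rw [Real.rpow_one]
      _ = x ^ (-s.re - 1 + 1) := (Real.rpow_add hx.1 _ _).symm
      _ = x ^ (-s.re) := by norm_num
  have I1inf : IntegrableOn f (Set.Ioi 1) := by
    apply Integrable.mono' (g := fun x : ℝ => x ^ (-s.re - 1))
      (integrableOn_Ioi_rpow_of_lt (by linarith) zero_lt_one)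
      (meas _ (Set.Ioi_subset_Ioi zero_le_one) measurableSet_Ioi)
    rw [ae_restrict_iff' measurableSet_Ioi]
    filter_upwards with x hx
    have hx0 : (0 : ℝ) < x := lt_trans zero_lt_one hx
    rw [hnorm_f x hx0]
    calc x ^ (-s.re - 1) * Int.fract x ≤ x ^ (-s.re - 1) * 1 :=
          mul_le_mul_of_nonneg_left (Int.fract_lt_one x).le (Real.rpow_nonneg hx0.le _)
      _ = x ^ (-s.re - 1) := mul_one _
  have E1 : ∫ x in Set.Ioc (0 : ℝ) 1, f x = 1 / (-s + 1) := by
    rw [integral_Ioc_eq_integral_Ioo,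
      setIntegral_congr_fun measurableSet_Ioo (g := fun x : ℝ => (x : ℂ) ^ (-s))
        (fun x hx => by
          simp only [hf]
          have hx0 : (x : ℂ) ≠ 0 := by exact_mod_cast hx.1.ne'
          rw [Int.fract_eq_self.mpr ⟨hx.1.le, hx.2⟩]
          have h1 : (x : ℂ) ^ (-s - 1 + 1) = (x : ℂ) ^ (-s - 1) * (x : ℂ) ^ (1 : ℂ) :=
            Complex.cpow_add _ _ hx0
          rw [show (-s - 1 + 1 : ℂ) = -s by ring, Complex.cpow_one] at h1
          rw [h1]),
      ← integral_Ioc_eq_integral_Ioo, ← intervalIntegral.integral_of_le zero_le_one,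
      integral_cpow (Or.inl (by simp; linarith))]
    rw [Complex.ofReal_one, Complex.ofReal_zero, Complex.one_cpow, Complex.zero_cpow hne1]
    ring
  have hdecomp : Set.Ioi (1 : ℝ) = ⋃ n : ℕ, Set.Ioc ((n : ℝ) + 1) ((n : ℝ) + 2) := by
    ext x
    simp only [Set.mem_Ioi, Set.mem_iUnion, Set.mem_Ioc]
    constructor
    · intro hx
      have hx0 : (0 : ℝ) ≤ x := by linarith
      have h2 : 1 < ⌈x⌉₊ := by
        rw [Nat.lt_ceil]; exact_mod_cast hx
      refine ⟨⌈x⌉₊ - 2, ?_, ?_⟩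
      · have : ((⌈x⌉₊ : ℝ)) < x + 1 := Nat.ceil_lt_add_one hx0
        have hcast : ((⌈x⌉₊ - 2 : ℕ) : ℝ) = (⌈x⌉₊ : ℝ) - 2 := by
          have : 2 ≤ ⌈x⌉₊ := h2
          push_cast [this]; ring
        rw [hcast]; linarith
      · have : x ≤ (⌈x⌉₊ : ℝ) := Nat.le_ceil x
        have hcast : ((⌈x⌉₊ - 2 : ℕ) : ℝ) = (⌈x⌉₊ : ℝ) - 2 := by
          have h2' : 2 ≤ ⌈x⌉₊ := h2
          push_cast [h2']; ring
        rw [hcast]; linarith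
    · rintro ⟨n, h1, -⟩
      have : (0 : ℝ) ≤ (n : ℝ) := Nat.cast_nonneg n
      linarith
  have E2 : ∫ x in Set.Ioi (1 : ℝ), f x = GAux s := by
    rw [hdecomp, integral_iUnion (fun n => measurableSet_Ioc) ?_ (hdecomp ▸ I1inf)]
    · rw [GAux]
      apply tsum_congr
      intro n
      have hfloor : ∀ x : ℝ, x ∈ Set.Ioo ((n : ℝ) + 1) ((n : ℝ) + 2) →
          Int.fract x = x - ((n : ℝ) + 1) := by
        intro x hx
        rw [Int.fract]
        have : ⌊x⌋ = (n : ℤ) + 1 := by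
          rw [Int.floor_eq_iff]
          constructor
          · push_cast; linarith [hx.1]
          · push_cast; linarith [hx.2]
        rw [this]; push_cast; ring
      rw [integral_Ioc_eq_integral_Ioo,
        setIntegral_congr_fun measurableSet_Ioo
          (g := fun x : ℝ => (x : ℂ) ^ (-s - 1) * ((x : ℂ) - ((n : ℕ) + 1 : ℂ)))
          (fun x hx => by
            simp only [hf]
            rw [hfloor x hx]
            push_cast
            ring),
        ← integral_Ioc_eq_integral_Ioo, ← intervalIntegral.integral_of_le (by linarith)]
      rw [phi_eq_integral (n + 1) (by omega) hs0' hs1']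
      push_cast
      ring_nf
      apply intervalIntegral.integral_congr
      intro x _
      ring
    · have key : ∀ i j : ℕ, i < j →
          Disjoint (Set.Ioc ((i : ℝ) + 1) ((i : ℝ) + 2)) (Set.Ioc ((j : ℝ) + 1) ((j : ℝ) + 2)) := by
        intro i j h
        rw [Set.Ioc_disjoint_Ioc]
        have h1 : ((i : ℝ)) + 1 ≤ (j : ℝ) := by exact_mod_cast Nat.succ_le_of_lt h
        calc min ((i : ℝ) + 2) ((j : ℝ) + 2) ≤ (i : ℝ) + 2 := min_le_left _ _
          _ ≤ (j : ℝ) + 1 := by linarith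
          _ ≤ max ((i : ℝ) + 1) ((j : ℝ) + 1) := le_max_right _ _
      intro i j hij
      rcases hij.lt_or_gt with h | h
      · exact key i j h
      · exact (key j i h).symm
  have hsub : (s - 1 : ℂ) ≠ 0 := fun h => hs1' (by linear_combination h)
  have Isplit : ∫ x in Set.Ioi (0 : ℝ), f x =
      (∫ x in Set.Ioc (0 : ℝ) 1, f x) + ∫ x in Set.Ioi (1 : ℝ), f x := by
    rw [← Set.Ioc_union_Ioi_eq_Ioi zero_le_one,
      setIntegral_union (Set.Ioc_disjoint_Ioi le_rfl) measurableSet_Ioi I01 I1inf]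
  rw [step1, Isplit, E1, E2, GAux_eq hs hs1']
  field_simp
  ring
end

section
/- For real σ with 0 < σ < 1, the function y ↦ e^{σy}(ψ(e^y + 1) - y) is integrable on ℝ, where ψ is the digamma function. -/
open MeasureTheory

/-- The digamma function ψ = Γ'/Γ on the reals. -/
noncomputable def digamma (x : ℝ) : ℝ := deriv Real.Gamma x / Real.Gamma x

lemma Gamma_ne_neg_nat {x : ℝ} (hx : 0 < x) : ∀ m : ℕ, x ≠ -m := fun m =>
  ne_of_gt (lt_of_le_of_lt (neg_nonpos.mpr (Nat.cast_nonneg m)) hx)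

lemma hasDerivAt_logGamma {x : ℝ} (hx : 0 < x) :
    HasDerivAt (Real.log ∘ Real.Gamma) (digamma x) x := by
  have hd : DifferentiableAt ℝ Real.Gamma x :=
    Real.differentiableAt_Gamma (Gamma_ne_neg_nat hx)
  have hne : Real.Gamma x ≠ 0 := (Real.Gamma_pos_of_pos hx).ne'
  exact hd.hasDerivAt.log hne

lemma slope_logGamma {x : ℝ} (hx : 0 < x) :
    slope (Real.log ∘ Real.Gamma) x (x + 1) = Real.log x := by
  rw [slope_def_field]
  simp only [Function.comp_apply, add_sub_cancel_left, div_one,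
    Real.Gamma_add_one hx.ne', Real.log_mul hx.ne' (Real.Gamma_pos_of_pos hx).ne']
  ring

lemma log_le_digamma {x : ℝ} (hx : 0 < x) : Real.log x ≤ digamma (x + 1) := by
  have h := Real.convexOn_log_Gamma.slope_le_of_hasDerivAt (x := x) (y := x + 1)
    (Set.mem_Ioi.mpr hx) (Set.mem_Ioi.mpr (by linarith)) (by linarith)
    (hasDerivAt_logGamma (by linarith : (0:ℝ) < x + 1))
  rwa [slope_logGamma hx] at h

lemma digamma_le_log {x : ℝ} (hx : 0 < x) : digamma (x + 1) ≤ Real.log (x + 1) := by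
  have hx1 : (0:ℝ) < x + 1 := by linarith
  have h := Real.convexOn_log_Gamma.le_slope_of_hasDerivAt (x := x + 1) (y := (x + 1) + 1)
    (Set.mem_Ioi.mpr hx1) (Set.mem_Ioi.mpr (by linarith)) (by linarith)
    (hasDerivAt_logGamma hx1)
  rwa [slope_logGamma hx1] at h

lemma integrableOn_exp_mul_Iio {b : ℝ} (hb : 0 < b) :
    IntegrableOn (fun y : ℝ => Real.exp (b * y)) (Set.Iio 0) := by
  have h1 : Integrable ((Set.Ioi (0:ℝ)).indicator fun x => Real.exp (-b * x)) :=
    (integrable_indicator_iff measurableSet_Ioi).2 (exp_neg_integrableOn_Ioi 0 hb)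
  have h2 := h1.comp_neg
  have h3 : (fun y : ℝ => (Set.Ioi (0:ℝ)).indicator (fun x => Real.exp (-b * x)) (-y))
      = (Set.Iio (0:ℝ)).indicator fun y => Real.exp (b * y) := by
    funext y
    simp only [Set.indicator_apply, Set.mem_Ioi, Set.mem_Iio, neg_pos]
    by_cases hy : y < 0 <;> simp only [hy, if_true, if_false]
    ring_nf
  rw [h3] at h2
  exact (integrable_indicator_iff measurableSet_Iio).1 h2

theorem stmt_6 (σ : ℝ) (hσ : 0 < σ) (hσ1 : σ < 1) :
    Integrable (fun y : ℝ => Real.exp (σ * y) * (digamma (Real.exp y + 1) - y)) := by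
  have hmeas : AEStronglyMeasurable
      (fun y : ℝ => Real.exp (σ * y) * (digamma (Real.exp y + 1) - y)) volume := by
    apply Measurable.aestronglyMeasurable
    have hGcont : Continuous fun y : ℝ => Real.Gamma (Real.exp y + 1) := by
      rw [continuous_iff_continuousAt]; intro y
      exact (Real.differentiableAt_Gamma
        (Gamma_ne_neg_nat (by positivity))).continuousAt.comp
        ((Real.continuous_exp.add continuous_const).continuousAt)
    have hdig : Measurable fun y : ℝ => digamma (Real.exp y + 1) := by
      show Measurable fun y : ℝ =>
        deriv Real.Gamma (Real.exp y + 1) / Real.Gamma (Real.exp y + 1)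
      exact ((measurable_deriv Real.Gamma).comp
        ((Real.measurable_exp).add_const 1)).div hGcont.measurable
    exact (Real.measurable_exp.comp (measurable_const.mul measurable_id)).mul
      (hdig.sub measurable_id)
  have hlb : ∀ y : ℝ, 0 ≤ digamma (Real.exp y + 1) - y := fun y => by
    have := log_le_digamma (Real.exp_pos y)
    rw [Real.log_exp] at this; linarith
  have hub : ∀ y : ℝ, digamma (Real.exp y + 1) - y ≤ Real.log (Real.exp y + 1) - y :=
    fun y => by linarith [digamma_le_log (Real.exp_pos y)]
  have habs : ∀ y : ℝ, ‖Real.exp (σ * y) * (digamma (Real.exp y + 1) - y)‖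
      = Real.exp (σ * y) * (digamma (Real.exp y + 1) - y) := fun y => by
    rw [Real.norm_eq_abs, abs_mul, abs_of_nonneg (Real.exp_pos _).le, abs_of_nonneg (hlb y)]
  rw [← integrableOn_univ, ← Set.Iio_union_Ici (a := (0:ℝ)), integrableOn_union]
  constructor
  · -- y < 0
    set C : ℝ := (2 / σ) * Real.exp (σ / 2 * Real.log 2) with hC
    have hbound : ∀ y ∈ Set.Iio (0:ℝ),
        ‖Real.exp (σ * y) * (digamma (Real.exp y + 1) - y)‖
          ≤ C * Real.exp (σ / 2 * y) := by
      intro y hy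
      have hy0 : y < 0 := hy
      have h1 : digamma (Real.exp y + 1) - y ≤ Real.log 2 - y := by
        have h2 := hub y
        have hle : Real.log (Real.exp y + 1) ≤ Real.log 2 := by
          apply Real.log_le_log (by positivity)
          have := Real.exp_le_one_iff.mpr hy0.le; linarith
        linarith
      have ha : (0:ℝ) < Real.log 2 - y := by
        have := Real.log_pos (by norm_num : (1:ℝ) < 2); linarith
      have h2 : Real.log 2 - y ≤ (2 / σ) * Real.exp (σ / 2 * (Real.log 2 - y)) := by
        have key := Real.add_one_le_exp (σ / 2 * (Real.log 2 - y))
        have h3 : σ / 2 * (Real.log 2 - y) ≤ Real.exp (σ / 2 * (Real.log 2 - y)) := by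
          nlinarith [mul_pos (half_pos hσ) ha]
        have hσ2 : 0 < σ / 2 := half_pos hσ
        calc Real.log 2 - y = (2 / σ) * (σ / 2 * (Real.log 2 - y)) := by
              field_simp
          _ ≤ (2 / σ) * Real.exp (σ / 2 * (Real.log 2 - y)) := by
              apply mul_le_mul_of_nonneg_left h3 (by positivity)
      rw [habs y]
      calc Real.exp (σ * y) * (digamma (Real.exp y + 1) - y)
          ≤ Real.exp (σ * y) * ((2 / σ) * Real.exp (σ / 2 * (Real.log 2 - y))) := by
            apply mul_le_mul_of_nonneg_left (le_trans h1 h2) (Real.exp_pos _).le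
        _ = C * Real.exp (σ / 2 * y) := by
            rw [hC]
            rw [show σ / 2 * (Real.log 2 - y)
                = σ / 2 * Real.log 2 + -(σ * y) + σ / 2 * y by ring]
            rw [Real.exp_add, Real.exp_add, Real.exp_neg]
            field_simp
    apply Integrable.mono' ((integrableOn_exp_mul_Iio (half_pos hσ)).const_mul C)
      hmeas.restrict
    exact (ae_restrict_iff' measurableSet_Iio).mpr (.of_forall hbound)
  · -- y ≥ 0
    have hbound : ∀ y ∈ Set.Ici (0:ℝ),
        ‖Real.exp (σ * y) * (digamma (Real.exp y + 1) - y)‖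
          ≤ Real.exp (-(1 - σ) * y) := by
      intro y _
      have h1 : digamma (Real.exp y + 1) - y ≤ Real.exp (-y) := by
        have h2 := hub y
        have h3 : Real.log (Real.exp y + 1) - y = Real.log (1 + Real.exp (-y)) := by
          rw [← Real.log_exp y, ← Real.log_div (by positivity) (Real.exp_pos y).ne',
            Real.log_exp]
          congr 1
          rw [Real.exp_neg]
          field_simp
        have h4 : Real.log (1 + Real.exp (-y)) ≤ Real.exp (-y) := by
          have := Real.log_le_sub_one_of_pos (show (0:ℝ) < 1 + Real.exp (-y) by positivity)
          linarith
        linarith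
      rw [habs y]
      calc Real.exp (σ * y) * (digamma (Real.exp y + 1) - y)
          ≤ Real.exp (σ * y) * Real.exp (-y) :=
            mul_le_mul_of_nonneg_left h1 (Real.exp_pos _).le
        _ = Real.exp (-(1 - σ) * y) := by rw [← Real.exp_add]; ring_nf
    have hint : IntegrableOn (fun y : ℝ => Real.exp (-(1 - σ) * y)) (Set.Ici 0) := by
      rw [integrableOn_Ici_iff_integrableOn_Ioi]
      exact exp_neg_integrableOn_Ioi 0 (by linarith)
    apply Integrable.mono' hint hmeas.restrict
    exact (ae_restrict_iff' measurableSet_Ici).mpr (.of_forall hbound)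
end

section
/- Let k, f ∈ L¹(ℝ) with convolution k ⋆ f = 0 almost everywhere. If the Fourier transform of k is nowhere zero, then f = 0 almost everywhere. -/
open MeasureTheory Complex Real FourierTransform SchwartzMap Filter
open scoped ContDiff RealInnerProductSpace

noncomputable def toSchwartzAux (g : ℝ → ℂ) (hg : ContDiff ℝ ∞ g) (h : HasCompactSupport g) :
    SchwartzMap ℝ ℂ where
  toFun := g
  smooth' := hg
  decay' := by
    intro k n
    have h1 : Continuous fun x : ℝ => ‖x‖ ^ k * ‖iteratedFDeriv ℝ n g x‖ :=
      (continuous_norm.pow k).mul (hg.continuous_iteratedFDeriv (by exact_mod_cast le_top)).norm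
    have h2 : HasCompactSupport fun x : ℝ => ‖x‖ ^ k * ‖iteratedFDeriv ℝ n g x‖ :=
      ((h.iteratedFDeriv n).norm).mul_left
    obtain ⟨C, hC⟩ := h1.bounded_above_of_compact_support h2
    exact ⟨C, fun x => le_trans (le_abs_self _) (hC x)⟩

theorem stmt_11 (k f : ℝ → ℂ) (hk : Integrable k) (hf : Integrable f)
    (hK : ∀ ξ : ℝ, (∫ x : ℝ, Complex.exp (-(Complex.I * ξ * x)) * k x) ≠ 0)
    (hconv : (fun x : ℝ => ∫ y : ℝ, k (x - y) * f y) =ᵐ[volume] 0) :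
    f =ᵐ[volume] 0 := by
  -- Step A: the (unnormalized) Fourier transform of f vanishes everywhere.
  have hF : ∀ ξ : ℝ, (∫ y : ℝ, Complex.exp (-(Complex.I * ξ * y)) * f y) = 0 := by
    intro ξ
    set e : ℝ → ℂ := fun x => Complex.exp (-(Complex.I * ξ * x)) with he
    have he_norm : ∀ x : ℝ, ‖e x‖ = 1 := by
      intro x
      simp [he, Complex.norm_exp]
    have he_cont : Continuous e := by fun_prop
    -- the double integrand is integrable
    have h1 : Integrable (fun p : ℝ × ℝ => f p.2 * k (p.1 - p.2)) (volume.prod volume) :=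
      hf.convolution_integrand (ContinuousLinearMap.mul ℂ ℂ) hk
    have hint : Integrable (fun p : ℝ × ℝ => e p.1 * (k (p.1 - p.2) * f p.2))
        (volume.prod volume) := by
      have := h1.bdd_mul ((he_cont.comp continuous_fst).aestronglyMeasurable)
        (c := 1) (Filter.Eventually.of_forall fun p => le_of_eq (he_norm p.1))
      apply this.congr
      filter_upwards with p
      simp only [Function.comp_apply]
      ring
    have h0 : (∫ x : ℝ, e x * (∫ y : ℝ, k (x - y) * f y)) = 0 := by
      have hz : (fun x : ℝ => e x * (∫ y : ℝ, k (x - y) * f y)) =ᵐ[volume] 0 := by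
        filter_upwards [hconv] with x hx
        have : (∫ y : ℝ, k (x - y) * f y) = 0 := hx
        simp [this]
      rw [integral_congr_ae hz]; simp
    have hswap : (∫ x : ℝ, e x * (∫ y : ℝ, k (x - y) * f y))
        = ∫ y : ℝ, ∫ x : ℝ, e x * (k (x - y) * f y) := by
      rw [← integral_integral_swap hint]
      apply integral_congr_ae
      filter_upwards with x
      rw [integral_const_mul]
    have hinner : ∀ y : ℝ, (∫ x : ℝ, e x * (k (x - y) * f y))
        = ((∫ x : ℝ, e x * k x) * (e y * f y)) := by
      intro y
      have hadd : ∀ x : ℝ, e (x + y) = e x * e y := by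
        intro x
        rw [he]
        simp only [← Complex.exp_add]
        congr 1
        push_cast
        ring
      have hpull : (∫ x : ℝ, e x * k (x - y)) = e y * ∫ x : ℝ, e x * k x := by
        rw [← integral_add_right_eq_self (fun x => e x * k (x - y)) y, ← integral_const_mul]
        apply integral_congr_ae
        filter_upwards with x
        rw [add_sub_cancel_right, hadd x]
        ring
      calc (∫ x : ℝ, e x * (k (x - y) * f y)) = (∫ x : ℝ, e x * k (x - y)) * f y := by
            rw [← integral_mul_const]
            apply integral_congr_ae
            filter_upwards with x
            ring
        _ = ((∫ x : ℝ, e x * k x) * (e y * f y)) := by rw [hpull]; ring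
    have hfact : (∫ y : ℝ, ∫ x : ℝ, e x * (k (x - y) * f y))
        = (∫ x : ℝ, e x * k x) * ∫ y : ℝ, e y * f y := by
      rw [← integral_const_mul]
      apply integral_congr_ae
      filter_upwards with y
      rw [hinner y]
    have : (∫ x : ℝ, e x * k x) * (∫ y : ℝ, e y * f y) = 0 := by
      rw [← hfact, ← hswap, h0]
    exact (mul_eq_zero.mp this).resolve_left (hK ξ)
  -- Step B: the Mathlib Fourier transform of f vanishes.
  have hFf : 𝓕 f = (0 : ℝ → ℂ) := by
    funext ξ
    rw [Real.fourier_eq']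
    rw [show (0 : ℝ → ℂ) ξ = 0 from rfl, ← hF (2 * π * ξ)]
    apply integral_congr_ae
    filter_upwards with v
    rw [smul_eq_mul]
    congr 2
    simp only [RCLike.inner_apply, conj_trivial]
    push_cast
    ring
  -- Step C: test against smooth compactly supported functions.
  have htest : ∀ (g : ℝ → ℝ), ContDiff ℝ ∞ g → HasCompactSupport g →
      ∫ x : ℝ, g x • f x = 0 := by
    intro g hg hgsupp
    have hgC : ContDiff ℝ ∞ (fun x : ℝ => (g x : ℂ)) :=
      Complex.ofRealCLM.contDiff.comp hg
    have hgsuppC : HasCompactSupport (fun x : ℝ => (g x : ℂ)) :=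
      hgsupp.comp_left (g := fun r : ℝ => (r : ℂ)) (by simp)
    set G : SchwartzMap ℝ ℂ := toSchwartzAux _ hgC hgsuppC with hG
    set h : SchwartzMap ℝ ℂ := (fourierTransformCLE ℂ (SchwartzMap ℝ ℂ)).symm G with hh
    have hGh : 𝓕 (⇑h) = ⇑G := by
      have h2 : fourierTransformCLE ℂ (SchwartzMap ℝ ℂ) h = G :=
        (fourierTransformCLE ℂ (SchwartzMap ℝ ℂ)).apply_symm_apply G
      rw [← h2]; rfl
    have key : (∫ x : ℝ, 𝓕 (⇑h) x • f x) = ∫ x : ℝ, h x • (𝓕 f x) := by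
      have hflip : (innerₗ ℝ : ℝ →ₗ[ℝ] ℝ →ₗ[ℝ] ℝ).flip = innerₗ ℝ :=
        LinearMap.ext₂ fun x y => real_inner_comm x y
      have := VectorFourier.integral_fourierIntegral_smul_eq_flip (L := innerₗ ℝ)
        (μ := volume) (ν := volume)
        Real.continuous_fourierChar continuous_inner h.integrable hf
      rw [hflip] at this
      exact this
    rw [hGh] at key
    have hz : (∫ x : ℝ, h x • (𝓕 f x)) = 0 := by
      rw [hFf]
      simp
    calc (∫ x : ℝ, g x • f x) = ∫ x : ℝ, G x • f x := by
          apply integral_congr_ae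
          filter_upwards with x
          simp only [show G x = (g x : ℂ) from rfl, smul_eq_mul, Complex.real_smul]
      _ = 0 := by rw [key, hz]
  exact ae_eq_zero_of_integral_contDiff_smul_eq_zero hf.locallyIntegrable htest
end

section
/- Suppose k ∈ L¹(ℝ) and the linear span of the translates {x ↦ k(x - y) : y ∈ ℝ} is dense in L¹(ℝ). Then the Fourier transform of k has no zeros on ℝ. -/
open MeasureTheory

theorem stmt_12 (k : ℝ → ℂ) (hk : Integrable k)
    (hdense : ∀ f : ℝ → ℂ, Integrable f → ∀ ε : ℝ, 0 < ε →
      ∃ (n : ℕ) (a : Fin n → ℂ) (z : Fin n → ℝ),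
        ∫ x : ℝ, ‖f x - ∑ i, a i * k (x - z i)‖ < ε) :
    ∀ ξ : ℝ, (∫ x : ℝ, Complex.exp (-(Complex.I * ξ * x)) * k x) ≠ 0 := by
  intro ξ hK
  -- test function
  set f : ℝ → ℂ := Set.indicator (Set.Icc (0:ℝ) 1)
      (fun x : ℝ => Complex.exp (Complex.I * ξ * x)) with hf_def
  have hmes : Measurable fun x : ℝ => Complex.exp (-(Complex.I * ξ * x)) := by
    fun_prop
  have hnorm : ∀ x : ℝ, ‖Complex.exp (-(Complex.I * ξ * x))‖ = 1 := by
    intro x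
    rw [Complex.norm_exp]
    simp [Complex.mul_re, Complex.mul_im]
  have hf : Integrable f := by
    apply MeasureTheory.IntegrableOn.integrable_indicator _ measurableSet_Icc
    apply Continuous.integrableOn_Icc
    fun_prop
  -- the "Fourier coefficient" of f at ξ equals 1
  have hintf : (∫ x : ℝ, Complex.exp (-(Complex.I * ξ * x)) * f x) = 1 := by
    have h1 : ∀ x : ℝ, Complex.exp (-(Complex.I * ξ * x)) * f x
        = Set.indicator (Set.Icc (0:ℝ) 1) (fun _ => (1:ℂ)) x := by
      intro x
      by_cases hx : x ∈ Set.Icc (0:ℝ) 1 <;>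
        simp [hf_def, Set.indicator, hx, ← Complex.exp_add]
    rw [funext h1, MeasureTheory.integral_indicator measurableSet_Icc]
    simp [Real.volume_Icc]
  obtain ⟨n, a, z, hlt⟩ := hdense f hf (1/2) (by norm_num)
  set g : ℝ → ℂ := fun x => ∑ i, a i * k (x - z i) with hg_def
  have hterm : ∀ i : Fin n, Integrable (fun x => a i * k (x - z i)) := by
    intro i
    exact (hk.comp_sub_right (z i)).const_mul _
  have hg : Integrable g := integrable_finset_sum _ (fun i _ => hterm i)
  -- the integral against each translate vanishes
  have htr : ∀ c : ℝ, (∫ x : ℝ, Complex.exp (-(Complex.I * ξ * x)) * k (x - c)) = 0 := by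
    intro c
    have h2 : ∀ x : ℝ, Complex.exp (-(Complex.I * ξ * x)) * k (x - c)
        = (fun y : ℝ => Complex.exp (-(Complex.I * ξ * c)) *
            (Complex.exp (-(Complex.I * ξ * y)) * k y)) (x - c) := by
      intro x
      simp only
      rw [← mul_assoc, ← Complex.exp_add]
      congr 2
      push_cast
      ring
    rw [funext h2, MeasureTheory.integral_sub_right_eq_self
      (fun y : ℝ => Complex.exp (-(Complex.I * ξ * c)) *
        (Complex.exp (-(Complex.I * ξ * y)) * k y)) c,
      integral_const_mul, hK, mul_zero]
  have hintg : (∫ x : ℝ, Complex.exp (-(Complex.I * ξ * x)) * g x) = 0 := by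
    have : (fun x : ℝ => Complex.exp (-(Complex.I * ξ * x)) * g x)
        = fun x : ℝ => ∑ i, a i * (Complex.exp (-(Complex.I * ξ * x)) * k (x - z i)) := by
      funext x
      rw [hg_def]
      simp [Finset.mul_sum]
      congr 1; funext i; ring
    rw [this, integral_finset_sum]
    · simp_rw [integral_const_mul]
      simp [htr]
    · intro i _
      refine ((hk.comp_sub_right (z i)).bdd_mul hmes.aestronglyMeasurable
        (ae_of_all _ fun x => le_of_eq (hnorm x))).const_mul _
  -- integrabilities of the products
  have hfi : Integrable (fun x : ℝ => Complex.exp (-(Complex.I * ξ * x)) * f x) :=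
    hf.bdd_mul hmes.aestronglyMeasurable (ae_of_all _ fun x => le_of_eq (hnorm x))
  have hgi : Integrable (fun x : ℝ => Complex.exp (-(Complex.I * ξ * x)) * g x) :=
    hg.bdd_mul hmes.aestronglyMeasurable (ae_of_all _ fun x => le_of_eq (hnorm x))
  have hsub : (∫ x : ℝ, Complex.exp (-(Complex.I * ξ * x)) * (f x - g x)) = 1 := by
    have : (fun x : ℝ => Complex.exp (-(Complex.I * ξ * x)) * (f x - g x))
        = fun x : ℝ => Complex.exp (-(Complex.I * ξ * x)) * f x
            - Complex.exp (-(Complex.I * ξ * x)) * g x := by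
      funext x; ring
    rw [this, integral_sub hfi hgi, hintf, hintg, sub_zero]
  have hbound : (1:ℝ) ≤ ∫ x : ℝ, ‖f x - g x‖ := by
    calc (1:ℝ) = ‖(∫ x : ℝ, Complex.exp (-(Complex.I * ξ * x)) * (f x - g x))‖ := by
          rw [hsub]; simp
      _ ≤ ∫ x : ℝ, ‖Complex.exp (-(Complex.I * ξ * x)) * (f x - g x)‖ :=
          norm_integral_le_integral_norm _
      _ = ∫ x : ℝ, ‖f x - g x‖ := by
          congr 1; funext x; rw [norm_mul, hnorm, one_mul]
  linarith
end

section
/- Let k ∈ L¹(ℝ) with nowhere-vanishing Fourier transform. If f₁, f₂ ∈ L¹(ℝ) satisfy k ⋆ f₁ = k ⋆ f₂ almost everywhere, then f₁ = f₂ almost everywhere. -/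
open MeasureTheory Complex Real SchwartzMap
open scoped FourierTransform RealInnerProductSpace ContDiff

noncomputable section Aux13

/-- A smooth compactly supported function is a Schwartz function. -/
def aux13_toSchwartz (φ : ℝ → ℂ) (h1 : ContDiff ℝ ∞ φ) (h2 : HasCompactSupport φ) :
    SchwartzMap ℝ ℂ where
  toFun := φ
  smooth' := h1
  decay' := by
    intro kk n
    have hc : Continuous fun x : ℝ => ‖x‖ ^ kk * ‖iteratedFDeriv ℝ n φ x‖ :=
      ((continuous_norm.pow kk)).mul (h1.continuous_iteratedFDeriv (by exact_mod_cast le_top)).norm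
    have hsupp : HasCompactSupport fun x : ℝ => ‖x‖ ^ kk * ‖iteratedFDeriv ℝ n φ x‖ := by
      have h3 : HasCompactSupport fun x : ℝ => ‖iteratedFDeriv ℝ n φ x‖ :=
        (h2.iteratedFDeriv n).comp_left (g := fun y => ‖y‖) norm_zero
      exact HasCompactSupport.mul_left h3
    obtain ⟨C, hC⟩ := hsupp.exists_bound_of_continuous hc
    refine ⟨C, fun x => (le_abs_self _).trans ?_⟩
    have := hC x
    rwa [Real.norm_eq_abs] at this

lemma aux13_norm_exp (ξ x : ℝ) : ‖Complex.exp (-(Complex.I * ξ * x))‖ = 1 := by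
  rw [Complex.norm_exp]
  simp [Complex.mul_re]

lemma aux13_integrable_mul (f : ℝ → ℂ) (hf : Integrable f) (ξ : ℝ) :
    Integrable (fun x : ℝ => Complex.exp (-(Complex.I * ξ * x)) * f x) := by
  apply hf.bdd_mul (c := 1)
  · exact (Complex.continuous_exp.comp (by fun_prop)).aestronglyMeasurable
  · exact Filter.Eventually.of_forall fun x => le_of_eq (aux13_norm_exp ξ x)

/-- Fourier transform of a convolution is the product of Fourier transforms. -/
lemma aux13_fourier_conv (k f : ℝ → ℂ) (hk : Integrable k) (hf : Integrable f) (ξ : ℝ) :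
    (∫ x : ℝ, Complex.exp (-(Complex.I * ξ * x)) * ∫ y : ℝ, k (x - y) * f y)
      = (∫ x : ℝ, Complex.exp (-(Complex.I * ξ * x)) * k x)
        * (∫ y : ℝ, Complex.exp (-(Complex.I * ξ * y)) * f y) := by
  have hint : Integrable (fun p : ℝ × ℝ =>
      Complex.exp (-(Complex.I * ξ * p.1)) * (k (p.1 - p.2) * f p.2))
      ((volume : Measure ℝ).prod volume) := by
    have h0 : Integrable (fun p : ℝ × ℝ =>
        (ContinuousLinearMap.mul ℂ ℂ) (f p.2) (k (p.1 - p.2)))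
        ((volume : Measure ℝ).prod volume) :=
      hf.convolution_integrand (ContinuousLinearMap.mul ℂ ℂ) hk
    have h1 : Integrable (fun p : ℝ × ℝ =>
        Complex.exp (-(Complex.I * ξ * p.1)) * (f p.2 * k (p.1 - p.2)))
        ((volume : Measure ℝ).prod volume) := by
      apply h0.bdd_mul (c := 1)
      · exact (Complex.continuous_exp.comp (by fun_prop)).aestronglyMeasurable
      · exact Filter.Eventually.of_forall fun p => le_of_eq (aux13_norm_exp ξ p.1)
    exact h1.congr (Filter.Eventually.of_forall fun p => by ring)
  calc (∫ x : ℝ, Complex.exp (-(Complex.I * ξ * x)) * ∫ y : ℝ, k (x - y) * f y)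
      = ∫ x : ℝ, ∫ y : ℝ, Complex.exp (-(Complex.I * ξ * x)) * (k (x - y) * f y) := by
        congr 1 with x
        rw [integral_const_mul]
    _ = ∫ y : ℝ, ∫ x : ℝ, Complex.exp (-(Complex.I * ξ * x)) * (k (x - y) * f y) :=
        integral_integral_swap hint
    _ = ∫ y : ℝ, (Complex.exp (-(Complex.I * ξ * y)) * f y)
          * ∫ x : ℝ, Complex.exp (-(Complex.I * ξ * x)) * k x := by
        congr 1 with y
        rw [← integral_add_right_eq_self
          (fun x : ℝ => Complex.exp (-(Complex.I * ξ * x)) * (k (x - y) * f y)) y]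
        simp only [add_sub_cancel_right]
        rw [← integral_const_mul]
        congr 1 with x
        rw [show (-(Complex.I * ξ * ((x : ℝ) + y : ℝ))) =
          -(Complex.I * ξ * x) + -(Complex.I * ξ * y) by push_cast; ring, Complex.exp_add]
        ring
    _ = (∫ x : ℝ, Complex.exp (-(Complex.I * ξ * x)) * k x)
        * (∫ y : ℝ, Complex.exp (-(Complex.I * ξ * y)) * f y) := by
        rw [integral_mul_const, mul_comm]

end Aux13

theorem stmt_13 (k f₁ f₂ : ℝ → ℂ) (hk : Integrable k)
    (hf₁ : Integrable f₁) (hf₂ : Integrable f₂)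
    (hK : ∀ ξ : ℝ, (∫ x : ℝ, Complex.exp (-(Complex.I * ξ * x)) * k x) ≠ 0)
    (hconv : (fun x : ℝ => ∫ y : ℝ, k (x - y) * f₁ y) =ᵐ[volume]
             (fun x : ℝ => ∫ y : ℝ, k (x - y) * f₂ y)) :
    f₁ =ᵐ[volume] f₂ := by
  set g : ℝ → ℂ := fun x => f₁ x - f₂ x with hgdef
  have hg : Integrable g := hf₁.sub hf₂
  -- Step 1: the (non-normalized) Fourier transform of g vanishes
  have hFg : ∀ ξ : ℝ, (∫ x : ℝ, Complex.exp (-(Complex.I * ξ * x)) * g x) = 0 := by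
    intro ξ
    have h3 : (∫ x : ℝ, Complex.exp (-(Complex.I * ξ * x)) * ∫ y : ℝ, k (x - y) * f₁ y)
        = ∫ x : ℝ, Complex.exp (-(Complex.I * ξ * x)) * ∫ y : ℝ, k (x - y) * f₂ y :=
      integral_congr_ae (hconv.mono fun x hx => by
        simpa using congrArg (fun z => Complex.exp (-(Complex.I * ξ * x)) * z) hx)
    have h4' : (∫ x : ℝ, Complex.exp (-(Complex.I * ξ * x)) * k x)
          * (∫ y : ℝ, Complex.exp (-(Complex.I * ξ * y)) * f₁ y)
        = (∫ x : ℝ, Complex.exp (-(Complex.I * ξ * x)) * k x)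
          * (∫ y : ℝ, Complex.exp (-(Complex.I * ξ * y)) * f₂ y) := by
      rw [← aux13_fourier_conv k f₁ hk hf₁ ξ, ← aux13_fourier_conv k f₂ hk hf₂ ξ]
      exact h3
    have h4 := mul_left_cancel₀ (hK ξ) h4'
    have h5 : (∫ x : ℝ, Complex.exp (-(Complex.I * ξ * x)) * g x)
        = (∫ x : ℝ, Complex.exp (-(Complex.I * ξ * x)) * f₁ x)
          - ∫ x : ℝ, Complex.exp (-(Complex.I * ξ * x)) * f₂ x := by
      rw [← integral_sub (aux13_integrable_mul f₁ hf₁ ξ) (aux13_integrable_mul f₂ hf₂ ξ)]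
      congr 1 with x
      simp only [hgdef]
      ring
    rw [h5, h4, sub_self]
  -- Step 2: the mathlib Fourier transform of g vanishes
  have h𝓕g : ∀ w : ℝ, 𝓕 g w = 0 := by
    intro w
    rw [Real.fourier_eq']
    rw [← hFg (2 * Real.pi * w)]
    congr 1 with v
    have hvw : (inner ℝ v w : ℝ) = v * w := by
      simp [RCLike.inner_apply, mul_comm]
    rw [hvw, smul_eq_mul]
    have harg : ((-2 * Real.pi * (v * w) : ℝ) : ℂ) * Complex.I
        = -(Complex.I * ((2 * Real.pi * w : ℝ) : ℂ) * v) := by push_cast; ring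
    rw [harg]
  -- Step 3: g integrates to zero against every smooth compactly supported function
  have key : ∀ (φ : ℝ → ℝ), ContDiff ℝ ∞ φ → HasCompactSupport φ →
      ∫ x : ℝ, φ x • g x = 0 := by
    intro φ hφ hφc
    set φc : ℝ → ℂ := fun x => (φ x : ℂ) with hφcdef
    have h1 : ContDiff ℝ ∞ φc := Complex.ofRealCLM.contDiff.comp hφ
    have h2 : HasCompactSupport φc :=
      hφc.comp_left (g := fun r : ℝ => (r : ℂ)) Complex.ofReal_zero
    set S : SchwartzMap ℝ ℂ := aux13_toSchwartz φc h1 h2 with hSdef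
    set ψ : SchwartzMap ℝ ℂ := (SchwartzMap.fourierTransformCLE ℂ (SchwartzMap ℝ ℂ)).symm S with hψdef
    have hψS : 𝓕 ⇑ψ = ⇑S := by
      have h := (SchwartzMap.fourierTransformCLE ℂ (SchwartzMap ℝ ℂ)).apply_symm_apply S
      calc 𝓕 ⇑ψ = ⇑(SchwartzMap.fourierTransformCLE ℂ (SchwartzMap ℝ ℂ) ψ) := by
            rfl
        _ = ⇑S := by rw [h]
    have hflipL : (innerₗ ℝ).flip = innerₗ ℝ := by
      apply LinearMap.ext; intro x; apply LinearMap.ext; intro y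
      simp only [LinearMap.flip_apply, innerₗ_apply_apply]
      exact real_inner_comm x y
    have flip : (∫ ξ : ℝ, (𝓕 ⇑ψ ξ) • g ξ) = ∫ x : ℝ, (ψ x) • 𝓕 g x := by
      have h := VectorFourier.integral_fourierIntegral_smul_eq_flip (L := innerₗ ℝ)
        (μ := (volume : Measure ℝ)) (ν := (volume : Measure ℝ))
        Real.continuous_fourierChar continuous_inner ψ.integrable hg
      rw [hflipL] at h
      exact h
    calc (∫ x : ℝ, φ x • g x) = ∫ x : ℝ, (𝓕 ⇑ψ x) • g x := by
          rw [hψS]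
          rfl
      _ = ∫ x : ℝ, (ψ x) • 𝓕 g x := flip
      _ = 0 := by simp [h𝓕g]
  have hzero : ∀ᵐ x ∂(volume : Measure ℝ), g x = 0 :=
    ae_eq_zero_of_integral_contDiff_smul_eq_zero hg.locallyIntegrable key
  filter_upwards [hzero] with x hx
  exact sub_eq_zero.mp hx
end

section
/- For real σ with 1/2 < σ < 1, the function x ↦ e^{σx}(Ei(-e^x) - 2Ei(-2e^x)) is in L²(ℝ). -/
open MeasureTheory

/-- The real exponential integral `Ei x = -∫_{-x}^∞ e^{-t}/t dt`, written (for `x < 0`)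
via the substitution `t = -x u` as `Ei x = -∫_1^∞ e^{x u}/u du`. -/
noncomputable def expIntegralEiReal (x : ℝ) : ℝ :=
  -∫ u in Set.Ioi (1 : ℝ), Real.exp (x * u) / u

open Set Real in
lemma ei_integrableOn {y : ℝ} (hy : 0 < y) :
    IntegrableOn (fun u : ℝ => Real.exp (-y * u) / u) (Set.Ioi 1) := by
  refine Integrable.mono (exp_neg_integrableOn_Ioi 1 hy)
    ((measurable_id.const_mul (-y)).exp.div measurable_id).aestronglyMeasurable ?_
  refine ae_restrict_of_forall_mem measurableSet_Ioi fun u hu => ?_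
  have hu1 : (1 : ℝ) < u := hu
  have h0 : (0:ℝ) < Real.exp (-y * u) := Real.exp_pos _
  rw [Real.norm_eq_abs, Real.norm_eq_abs, abs_of_nonneg (by positivity),
    abs_of_nonneg h0.le]
  exact div_le_self h0.le hu1.le

open Set Real in
lemma ei_abs_eq (x : ℝ) :
    |expIntegralEiReal x| = ∫ u in Set.Ioi (1:ℝ), Real.exp (x * u) / u := by
  rw [expIntegralEiReal, abs_neg, abs_of_nonneg]
  refine setIntegral_nonneg measurableSet_Ioi fun u hu => ?_
  have : (0:ℝ) < u := lt_trans one_pos hu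
  positivity

open Set Real in
lemma integral_exp_mul_Ioi' {y : ℝ} (hy : 0 < y) (c : ℝ) :
    ∫ u in Set.Ioi c, Real.exp (-(y * u)) = Real.exp (-(y*c)) / y := by
  have := integral_comp_mul_left_Ioi (fun t => Real.exp (-t)) c hy
  simp only [smul_eq_mul] at this
  rw [this, integral_exp_neg_Ioi]
  ring

open Set Real in
lemma ei_bound_one {y : ℝ} (hy : 0 < y) : |expIntegralEiReal (-y)| ≤ 1 / y := by
  rw [ei_abs_eq]
  have hInt : IntegrableOn (fun u : ℝ => Real.exp (-(y * u))) (Ioi 1) := by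
    simpa [neg_mul] using exp_neg_integrableOn_Ioi 1 hy
  have h1 : ∫ u in Ioi (1:ℝ), Real.exp (-y * u) / u ≤ ∫ u in Ioi (1:ℝ), Real.exp (-(y * u)) :=
    setIntegral_mono_on (ei_integrableOn hy) hInt measurableSet_Ioi
      (fun u hu => by
        rw [neg_mul]
        exact div_le_self (Real.exp_pos _).le (le_of_lt hu))
  rw [integral_exp_mul_Ioi' hy 1] at h1
  refine h1.trans ?_
  gcongr
  exact Real.exp_le_one_iff.mpr (by nlinarith)

open Set Real in
lemma ei_bound_log {y : ℝ} (hy : 0 < y) (hy1 : y ≤ 1) :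
    |expIntegralEiReal (-y)| ≤ 1 - Real.log y := by
  rw [ei_abs_eq]
  set b : ℝ := 1/y with hb
  have hb1 : (1:ℝ) ≤ b := by rw [hb, le_div_iff₀ hy]; linarith
  have hbpos : 0 < b := lt_of_lt_of_le one_pos hb1
  have hsplit : Ioi (1:ℝ) = Ioc 1 b ∪ Ioi b := (Ioc_union_Ioi_eq_Ioi hb1).symm
  have hI1 : IntegrableOn (fun u : ℝ => Real.exp (-y * u) / u) (Ioc 1 b) :=
    (ei_integrableOn hy).mono_set Ioc_subset_Ioi_self
  have hI2 : IntegrableOn (fun u : ℝ => Real.exp (-y * u) / u) (Ioi b) :=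
    (ei_integrableOn hy).mono_set (Ioi_subset_Ioi hb1)
  rw [hsplit, setIntegral_union Ioc_disjoint_Ioi_same measurableSet_Ioi hI1 hI2]
  have hA : ∫ u in Ioc (1:ℝ) b, Real.exp (-y * u) / u ≤ - Real.log y := by
    have hIdiv : IntegrableOn (fun u : ℝ => 1 / u) (Ioc 1 b) := by
      rw [← intervalIntegrable_iff_integrableOn_Ioc_of_le hb1]
      exact intervalIntegral.intervalIntegrable_one_div
        (fun x hx => by
          rw [Set.uIcc_of_le hb1] at hx
          exact (lt_of_lt_of_le one_pos hx.1).ne') (by fun_prop)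
    have hle : ∫ u in Ioc (1:ℝ) b, Real.exp (-y * u) / u ≤ ∫ u in Ioc (1:ℝ) b, 1 / u := by
      refine setIntegral_mono_on hI1 hIdiv measurableSet_Ioc fun u hu => ?_
      have hu0 : (0:ℝ) < u := lt_trans one_pos hu.1
      gcongr
      exact Real.exp_le_one_iff.mpr (by nlinarith)
    have hval : ∫ u in Ioc (1:ℝ) b, (1:ℝ) / u = Real.log b := by
      rw [← intervalIntegral.integral_of_le hb1, integral_one_div]
      · simp
      · intro h
        rw [Set.mem_uIcc] at h
        rcases h with ⟨h1, _⟩ | ⟨_, h2⟩ <;> linarith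
    have hlog : Real.log b = -Real.log y := by rw [hb, one_div, Real.log_inv]
    rw [hval, hlog] at hle
    exact hle
  have hB : ∫ u in Ioi b, Real.exp (-y * u) / u ≤ 1 := by
    have hIb : IntegrableOn (fun u : ℝ => Real.exp (-(y * u))) (Ioi b) := by
      simpa [neg_mul] using exp_neg_integrableOn_Ioi b hy
    have hIb' : IntegrableOn (fun u : ℝ => Real.exp (-(y * u)) / b) (Ioi b) :=
      Integrable.div_const hIb b
    have hle : ∫ u in Ioi b, Real.exp (-y * u) / u ≤ ∫ u in Ioi b, Real.exp (-(y * u)) / b :=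
      setIntegral_mono_on hI2 hIb' measurableSet_Ioi (fun u hu => by
        rw [neg_mul]
        exact div_le_div_of_nonneg_left (Real.exp_pos _).le hbpos (le_of_lt hu))
    refine hle.trans ?_
    rw [integral_div, integral_exp_mul_Ioi' hy b]
    have hyb : y * b = 1 := by rw [hb]; field_simp
    rw [hyb, div_div, hyb, div_one]
    exact Real.exp_le_one_iff.mpr (by norm_num)
  linarith

lemma ei_measurable : Measurable expIntegralEiReal := by
  have h : StronglyMeasurable (fun p : ℝ × ℝ => Real.exp (p.1 * p.2) / p.2) :=
    ((measurable_fst.mul measurable_snd).exp.div measurable_snd).stronglyMeasurable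
  have := h.integral_prod_right' (ν := volume.restrict (Set.Ioi 1))
  exact this.measurable.neg

open Set Real in
theorem stmt_16 (σ : ℝ) (hσ : 1 / 2 < σ) (hσ1 : σ < 1) :
    MemLp (fun x : ℝ =>
        Real.exp (σ * x) *
          (expIntegralEiReal (-Real.exp x) - 2 * expIntegralEiReal (-2 * Real.exp x)))
      2 volume := by
  set f : ℝ → ℝ := fun x =>
    Real.exp (σ * x) *
      (expIntegralEiReal (-Real.exp x) - 2 * expIntegralEiReal (-2 * Real.exp x)) with hf
  have hσ0 : 0 < σ := by linarith
  have hmeas : Measurable f := by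
    refine ((measurable_id.const_mul σ).exp).mul ?_
    exact (ei_measurable.comp Real.measurable_exp.neg).sub
      ((ei_measurable.comp (Real.measurable_exp.const_mul (-2))).const_mul 2)
  rw [memLp_two_iff_integrable_sq hmeas.aestronglyMeasurable]
  rw [← integrableOn_univ, ← Set.Iio_union_Ici (a := (0:ℝ))]
  apply IntegrableOn.union
  · -- negative side
    have hg : IntegrableOn (fun x : ℝ => 576 * Real.exp (σ * x)) (Iio 0) := by
      have h1 : Integrable (fun x : ℝ => (Ioi (0:ℝ)).indicator
          (fun t => Real.exp (-(σ * t))) x) := by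
        refine IntegrableOn.integrable_indicator ?_ measurableSet_Ioi
        simpa [neg_mul] using exp_neg_integrableOn_Ioi 0 hσ0
      have h2 := h1.comp_neg
      have h3 : (fun x : ℝ => (Ioi (0:ℝ)).indicator (fun t => Real.exp (-(σ * t))) (-x))
          = (Iio (0:ℝ)).indicator (fun x => Real.exp (σ * x)) := by
        funext x
        by_cases hx : x < 0
        · rw [Set.indicator_of_mem (show -x ∈ Ioi (0:ℝ) by simpa using hx),
            Set.indicator_of_mem (show x ∈ Iio (0:ℝ) from hx)]
          ring_nf
        · rw [Set.indicator_of_notMem (show -x ∉ Ioi (0:ℝ) by simpa using hx),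
            Set.indicator_of_notMem (show x ∉ Iio (0:ℝ) from hx)]
      rw [h3] at h2
      exact Integrable.const_mul ((integrable_indicator_iff measurableSet_Iio).mp h2) 576
    refine Integrable.mono hg ((hmeas.pow_const 2).aestronglyMeasurable.restrict) ?_
    refine ae_restrict_of_forall_mem measurableSet_Iio fun x hx => ?_
    have hx0 : x < 0 := hx
    have he1 : Real.exp x ≤ 1 := Real.exp_le_one_iff.mpr hx0.le
    have hb1 : |expIntegralEiReal (-Real.exp x)| ≤ 1 - x := by
      have := ei_bound_log (Real.exp_pos x) he1
      rwa [Real.log_exp] at this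
    have hb2 : |expIntegralEiReal (-2 * Real.exp x)| ≤ 1 - x := by
      rw [show (-2 : ℝ) * Real.exp x = -(2 * Real.exp x) from by ring]
      rcases le_or_gt (2 * Real.exp x) 1 with h | h
      · have h' := ei_bound_log (by positivity) h
        rw [Real.log_mul two_ne_zero (Real.exp_ne_zero x), Real.log_exp] at h'
        have hl2 : 0 ≤ Real.log 2 := Real.log_nonneg one_le_two
        linarith
      · have h' := ei_bound_one (y := 2 * Real.exp x) (by positivity)
        have h1 : 1 / (2 * Real.exp x) ≤ 1 := by
          rw [div_le_one (by positivity)]; linarith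
        linarith
    have habs : |f x| ≤ Real.exp (σ * x) * (3 * (1 - x)) := by
      rw [hf]
      simp only
      rw [abs_mul, abs_of_nonneg (Real.exp_pos _).le]
      refine mul_le_mul_of_nonneg_left ?_ (Real.exp_pos _).le
      have htri : |expIntegralEiReal (-Real.exp x) - 2 * expIntegralEiReal (-2 * Real.exp x)|
          ≤ |expIntegralEiReal (-Real.exp x)| + |2 * expIntegralEiReal (-2 * Real.exp x)| :=
        abs_sub _ _
      rw [abs_mul, abs_two] at htri
      linarith
    set a : ℝ := Real.exp (σ * x / 4) with ha
    have hapos : 0 < a := Real.exp_pos _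
    have ha1 : a ≤ 1 := Real.exp_le_one_iff.mpr (by nlinarith)
    have haa : Real.exp (σ * x) = a ^ 4 := by
      rw [ha, ← Real.exp_nat_mul]
      norm_num
      ring
    have h1 : a * (1 - σ * x / 4) ≤ 1 := by
      have he := Real.add_one_le_exp (-(σ * x / 4))
      have hprod : a * Real.exp (-(σ * x / 4)) = 1 := by
        rw [ha, ← Real.exp_add]; simp
      have hmul := mul_le_mul_of_nonneg_left he hapos.le
      rw [hprod] at hmul
      nlinarith
    have h2 : a * (1 - x) ≤ 8 := by
      nlinarith [mul_nonneg (by linarith : (0:ℝ) ≤ σ - 1/2)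
        (mul_nonneg hapos.le (by linarith : (0:ℝ) ≤ -x))]
    have h3 : (a * (1 - x)) ^ 2 ≤ 64 := by
      nlinarith [mul_nonneg hapos.le (by linarith : (0:ℝ) ≤ 1 - x)]
    have hkey : Real.exp (σ * x) ^ 2 * (3 * (1 - x)) ^ 2 ≤ 576 * Real.exp (σ * x) := by
      rw [haa]
      have h4 : (a:ℝ)^6 ≤ a^4 := pow_le_pow_of_le_one hapos.le ha1 (by norm_num)
      nlinarith [mul_le_mul_of_nonneg_left h3 (pow_nonneg hapos.le 6)]
    rw [Real.norm_eq_abs, Real.norm_eq_abs, abs_of_nonneg (sq_nonneg _),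
      abs_of_nonneg (by positivity : (0:ℝ) ≤ 576 * Real.exp (σ * x))]
    calc f x ^ 2 = |f x| ^ 2 := (sq_abs _).symm
      _ ≤ (Real.exp (σ * x) * (3 * (1 - x))) ^ 2 := by
          apply pow_le_pow_left₀ (abs_nonneg _) habs
      _ = Real.exp (σ * x) ^ 2 * (3 * (1 - x)) ^ 2 := by ring
      _ ≤ 576 * Real.exp (σ * x) := hkey
  · -- positive side
    have hg : IntegrableOn (fun x : ℝ => 4 * Real.exp (-(2 - 2*σ) * x)) (Ici 0) := by
      refine Integrable.const_mul ?_ 4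
      exact (exp_neg_integrableOn_Ioi (-1) (by linarith : (0:ℝ) < 2 - 2*σ)).mono_set
        (fun x hx => lt_of_lt_of_le (by norm_num) (Set.mem_Ici.mp hx))
    refine Integrable.mono hg ((hmeas.pow_const 2).aestronglyMeasurable.restrict) ?_
    refine ae_restrict_of_forall_mem measurableSet_Ici fun x hx => ?_
    have hx0 : (0:ℝ) ≤ x := hx
    have hb1 : |expIntegralEiReal (-Real.exp x)| ≤ Real.exp (-x) := by
      have := ei_bound_one (Real.exp_pos x)
      rwa [one_div, ← Real.exp_neg] at this
    have hb2 : |expIntegralEiReal (-2 * Real.exp x)| ≤ Real.exp (-x) / 2 := by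
      rw [show (-2 : ℝ) * Real.exp x = -(2 * Real.exp x) from by ring]
      refine (ei_bound_one (y := 2 * Real.exp x) (by positivity)).trans ?_
      rw [Real.exp_neg]
      ring_nf
      rfl
    have habs : |f x| ≤ 2 * Real.exp ((σ - 1) * x) := by
      rw [hf]
      simp only
      rw [abs_mul, abs_of_nonneg (Real.exp_pos _).le]
      have htri : |expIntegralEiReal (-Real.exp x) - 2 * expIntegralEiReal (-2 * Real.exp x)|
          ≤ |expIntegralEiReal (-Real.exp x)| + |2 * expIntegralEiReal (-2 * Real.exp x)| :=
        abs_sub _ _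
      rw [abs_mul, abs_two] at htri
      have hd : |expIntegralEiReal (-Real.exp x) - 2 * expIntegralEiReal (-2 * Real.exp x)|
          ≤ 2 * Real.exp (-x) := by linarith
      calc Real.exp (σ*x) * |expIntegralEiReal (-Real.exp x)
            - 2 * expIntegralEiReal (-2 * Real.exp x)|
          ≤ Real.exp (σ*x) * (2 * Real.exp (-x)) :=
            mul_le_mul_of_nonneg_left hd (Real.exp_pos _).le
        _ = 2 * Real.exp ((σ - 1) * x) := by
            rw [show Real.exp (σ*x) * (2 * Real.exp (-x))
                = 2 * (Real.exp (σ*x) * Real.exp (-x)) from by ring, ← Real.exp_add]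
            congr 1
            ring
    rw [Real.norm_eq_abs, Real.norm_eq_abs, abs_of_nonneg (sq_nonneg _),
      abs_of_nonneg (by positivity : (0:ℝ) ≤ 4 * Real.exp (-(2 - 2*σ) * x))]
    have hsq : Real.exp ((σ - 1) * x) ^ 2 = Real.exp (-(2 - 2*σ) * x) := by
      rw [← Real.exp_nat_mul]
      congr 1
      push_cast
      ring
    calc f x ^ 2 = |f x| ^ 2 := (sq_abs _).symm
      _ ≤ (2 * Real.exp ((σ - 1) * x)) ^ 2 := pow_le_pow_left₀ (abs_nonneg _) habs 2
      _ = 4 * Real.exp (-(2 - 2*σ) * x) := by rw [mul_pow, hsq]; norm_num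
end
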